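/- Let $1 \leq p_i < \infty$, $\frac{1}{p} = \sum_i \frac{1}{p_i}$, and weights $w_1,\dots,w_m,\nu$. Then $[\vec{w},\nu]_{A_{\vec{P}}^{\mathcal{R}}} \leq \|\vec{w},\nu\|_{A_{\vec{P}}^{\mathcal{R}}} \leq p_1\cdots p_m\,[\vec{w},\nu]_{A_{\vec{P}}^{\mathcal{R}}}$, where $\|\vec{w},\nu\|_{A_{\vec{P}}^{\mathcal{R}}} = \sup_Q \nu(Q)^{1/p}\prod_{i=1}^m \sup_{E_i \subseteq Q} \frac{|E_i|}{|Q|} w_i(E_i)^{-1/p_i}$ and $[\vec{w},\nu]_{A_{\vec{P}}^{\mathcal{R}}} = \sup_Q \nu(Q)^{1/p}\prod_{i=1}^m \frac{\|\chi_Q w_i^{-1}\|_{L^{p_i',\infty}(w_i)}}{|Q|}$. -/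

import Mathlib

open MeasureTheory Set ENNReal NNReal

noncomputable section

abbrev Rn (n : ℕ) := EuclideanSpace ℝ (Fin n)

variable {n : ℕ}

/-- The closed cube with lower-left corner `x` and side length `r`. -/
def cubeSet (x : Rn n) (r : ℝ) : Set (Rn n) := {y : Rn n | ∀ i, x i ≤ y i ∧ y i ≤ x i + r}

def IsCube (Q : Set (Rn n)) : Prop := ∃ (x : Rn n) (r : ℝ), 0 < r ∧ Q = cubeSet x r

/-- `w(E) = ∫_E w`. -/
def wInt (w : Rn n → ℝ≥0∞) (E : Set (Rn n)) : ℝ≥0∞ := ∫⁻ x in E, w x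

/-- A weight: a measurable, positive, finite, locally integrable function. -/
def IsWeight (w : Rn n → ℝ≥0∞) : Prop :=
  Measurable w ∧ (∀ x, 0 < w x ∧ w x ≠ ∞) ∧ ∀ Q : Set (Rn n), IsCube Q → wInt w Q ≠ ∞

/-- Average of `w` over `Q`. -/
def avgw (w : Rn n → ℝ≥0∞) (Q : Set (Rn n)) : ℝ≥0∞ := wInt w Q / volume Q

def A1Const (w : Rn n → ℝ≥0∞) : ℝ≥0∞ :=
  ⨆ (Q : Set (Rn n)) (_ : IsCube Q), avgw w Q * (essInf w (volume.restrict Q))⁻¹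

def ApConst (p : ℝ) (w : Rn n → ℝ≥0∞) : ℝ≥0∞ :=
  ⨆ (Q : Set (Rn n)) (_ : IsCube Q),
    avgw w Q * (avgw (fun x => w x ^ (1 - p / (p - 1))) Q) ^ (p - 1)

def MemAp (p : ℝ) (w : Rn n → ℝ≥0∞) : Prop :=
  if p = 1 then A1Const w ≠ ∞ else ApConst p w ≠ ∞

def MemAinf (w : Rn n → ℝ≥0∞) : Prop := ∃ p : ℝ, 1 ≤ p ∧ MemAp p w

def RHinfConst (w : Rn n → ℝ≥0∞) : ℝ≥0∞ :=
  ⨆ (Q : Set (Rn n)) (_ : IsCube Q), (volume Q / wInt w Q) * essSup w (volume.restrict Q)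

/-- Weak `L^p` quasinorm with respect to a measure `μ`. -/
def wkNorm {α : Type*} [MeasurableSpace α] (f : α → ℝ≥0∞) (p : ℝ) (μ : Measure α) : ℝ≥0∞ :=
  ⨆ y : ℝ≥0, (y : ℝ≥0∞) * (μ {x | (y : ℝ≥0∞) < f x}) ^ (1 / p)

/-- The measure `w(x) dx`. -/
def wMeasure (w : Rn n → ℝ≥0∞) : Measure (Rn n) := volume.withDensity w

/-- Weak `L^{p,∞}(w)` quasinorm. -/
def wkNormW (f : Rn n → ℝ≥0∞) (p : ℝ) (w : Rn n → ℝ≥0∞) : ℝ≥0∞ := wkNorm f p (wMeasure w)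

/-- Lorentz `L^{p,1}(w)` norm: `p ∫_0^∞ w({|f| > y})^{1/p} dy`. -/
def lorNorm (f : Rn n → ℝ≥0∞) (p : ℝ) (w : Rn n → ℝ≥0∞) : ℝ≥0∞ :=
  ENNReal.ofReal p * ∫⁻ y in Ioi (0 : ℝ), (wMeasure w {x | ENNReal.ofReal y < f x}) ^ (1 / p)

/-- The Hardy–Littlewood maximal operator over cubes. -/
def HLM (f : Rn n → ℝ≥0∞) (x : Rn n) : ℝ≥0∞ :=
  ⨆ (Q : Set (Rn n)) (_ : IsCube Q) (_ : x ∈ Q), (∫⁻ y in Q, f y) / volume Q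

/-- `‖w‖_{A_p^R}`. -/
def AprNorm (p : ℝ) (w : Rn n → ℝ≥0∞) : ℝ≥0∞ :=
  ⨆ (Q : Set (Rn n)) (_ : IsCube Q) (E : Set (Rn n)) (_ : MeasurableSet E) (_ : E ⊆ Q)
    (_ : 0 < wInt w E), (volume E / volume Q) * (wInt w Q / wInt w E) ^ (1 / p)

def MemApr (p : ℝ) (w : Rn n → ℝ≥0∞) : Prop := AprNorm p w ≠ ∞

/-- `L^{p',∞}(w)` norm, interpreted as `L^∞(w)` when `p = 1`. -/
def dualWkNorm (p : ℝ) (g : Rn n → ℝ≥0∞) (w : Rn n → ℝ≥0∞) : ℝ≥0∞ :=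
  if p = 1 then essSup g (wMeasure w) else wkNormW g (p / (p - 1)) w

/-- `[w]_{A_p^R}`. -/
def AprConst (p : ℝ) (w : Rn n → ℝ≥0∞) : ℝ≥0∞ :=
  ⨆ (Q : Set (Rn n)) (_ : IsCube Q),
    wInt w Q ^ (1 / p) * dualWkNorm p (Q.indicator fun x => (w x)⁻¹) w / volume Q

/-- The multi(sub)linear maximal operator `𝓜`. -/
def curlyM {m : ℕ} (f : Fin m → Rn n → ℝ≥0∞) (x : Rn n) : ℝ≥0∞ :=
  ⨆ (Q : Set (Rn n)) (_ : IsCube Q) (_ : x ∈ Q), ∏ i, (∫⁻ y in Q, f i y) / volume Q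

/-- The `A_{P⃗}^R` constant `[w⃗, ν]`. -/
def AvecConst {n m : ℕ} (pp : Fin m → ℝ) (p : ℝ) (w : Fin m → Rn n → ℝ≥0∞)
    (ν : Rn n → ℝ≥0∞) : ℝ≥0∞ :=
  ⨆ (Q : Set (Rn n)) (_ : IsCube Q),
    wInt ν Q ^ (1 / p) *
      ∏ i, dualWkNorm (pp i) (Q.indicator fun x => (w i x)⁻¹) (w i) / volume Q

/-- The Kerman–Torchinsky style constant `‖w⃗, ν‖`. -/
def AvecNorm {n m : ℕ} (pp : Fin m → ℝ) (p : ℝ) (w : Fin m → Rn n → ℝ≥0∞)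
    (ν : Rn n → ℝ≥0∞) : ℝ≥0∞ :=
  ⨆ (Q : Set (Rn n)) (_ : IsCube Q),
    wInt ν Q ^ (1 / p) *
      ∏ i, ⨆ (E : Set (Rn n)) (_ : MeasurableSet E) (_ : E ⊆ Q) (_ : 0 < wInt (w i) E),
        (volume E / volume Q) * wInt (w i) E ^ (-(1 / pp i))

section Helpers

lemma isCube_measurableSet {Q : Set (Rn n)} (hQ : IsCube Q) : MeasurableSet Q := by
  obtain ⟨x, r, -, rfl⟩ := hQ
  have : cubeSet x r = ⋂ i, ((fun y : Rn n => y i) ⁻¹' Icc (x i) (x i + r)) := by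
    ext y; simp [cubeSet, mem_Icc]
  rw [this]
  exact MeasurableSet.iInter fun i => measurableSet_Icc.preimage (by fun_prop)

/-- Key lemma A: the dual weak norm is dominated by the set-form supremum. -/
lemma keyA {w : Rn n → ℝ≥0∞} (hw : Measurable w) (hw0 : ∀ x, 0 < w x ∧ w x ≠ ∞)
    {Q : Set (Rn n)} (hQm : MeasurableSet Q) (hQfin : wInt w Q ≠ ∞) {p : ℝ} (hp : 1 ≤ p) :
    dualWkNorm p (Q.indicator fun x => (w x)⁻¹) w ≤
      ⨆ (E : Set (Rn n)) (_ : MeasurableSet E) (_ : E ⊆ Q) (_ : 0 < wInt w E),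
        volume E * wInt w E ^ (-(1 / p)) := by
  set g : Rn n → ℝ≥0∞ := Q.indicator fun x => (w x)⁻¹ with hg_def
  have hg : Measurable g := (hw.inv).indicator hQm
  set F : ℝ≥0∞ → Set (Rn n) := fun c => {x | c < g x} with hF_def
  have hFm : ∀ c, MeasurableSet (F c) := fun c => measurableSet_lt measurable_const hg
  have hFQ : ∀ c, F c ⊆ Q := by
    intro c x hx
    by_contra hxQ
    have h0 : g x = 0 := indicator_of_notMem hxQ _
    rw [hF_def] at hx
    simp only [mem_setOf_eq, h0] at hx
    exact (not_lt_of_ge (zero_le : (0:ℝ≥0∞) ≤ c)) hx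
  have hFt : ∀ c, wInt w (F c) ≠ ∞ :=
    fun c => (lt_of_le_of_lt (lintegral_mono_set (hFQ c)) hQfin.lt_top).ne
  have hkey : ∀ c : ℝ≥0∞, c ≠ 0 → c ≠ ∞ → c * wInt w (F c) ≤ volume (F c) := by
    intro c hc0 hct
    have hwle : ∀ x ∈ F c, w x ≤ c⁻¹ := by
      intro x hx
      have hxQ := hFQ c hx
      have h1 : c < (w x)⁻¹ := by
        have := hx
        rw [hF_def] at this
        simp only [mem_setOf_eq, hg_def, indicator_of_mem hxQ] at this
        exact this
      exact le_of_lt (ENNReal.lt_inv_iff_lt_inv.1 h1)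
    calc c * wInt w (F c) ≤ c * (c⁻¹ * volume (F c)) := by
          refine mul_le_mul_right ?_ c
          calc wInt w (F c) = ∫⁻ x in F c, w x := rfl
            _ ≤ ∫⁻ _ in F c, c⁻¹ := setLIntegral_mono' (hFm c) hwle
            _ = c⁻¹ * volume (F c) := setLIntegral_const _ _
      _ = volume (F c) := by rw [← mul_assoc, ENNReal.mul_inv_cancel hc0 hct, one_mul]
  rcases eq_or_lt_of_le hp with hp1 | hp1
  · -- p = 1
    subst hp1
    rw [dualWkNorm, if_pos rfl]
    by_contra hcon
    push_neg at hcon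
    obtain ⟨c, hSc, hce⟩ := exists_between hcon
    have hc0 : c ≠ 0 := (lt_of_le_of_lt zero_le hSc).ne'
    have hct : c ≠ ∞ := hce.ne_top
    have hμF : wMeasure w (F c) ≠ 0 := by
      intro h0
      have hle : g ≤ᵐ[wMeasure w] fun _ => c := by
        refine (ae_iff).2 ?_
        have : {x | ¬ g x ≤ c} = F c := by ext x; simp [hF_def, not_le]
        rw [this]; exact h0
      exact absurd (essSup_le_of_ae_le c hle) (not_le.2 hce)
    have hwF0 : wInt w (F c) ≠ 0 := by
      rwa [wMeasure, withDensity_apply _ (hFm c)] at hμF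
    have hcle : c ≤ volume (F c) * wInt w (F c) ^ (-(1 / (1:ℝ))) := by
      rw [show (-(1/(1:ℝ))) = -1 by norm_num, ENNReal.rpow_neg_one, ← div_eq_mul_inv]
      exact (ENNReal.le_div_iff_mul_le (Or.inl hwF0) (Or.inl (hFt c))).2 (hkey c hc0 hct)
    have hle2 : volume (F c) * wInt w (F c) ^ (-(1 / (1:ℝ))) ≤
        ⨆ (E : Set (Rn n)) (_ : MeasurableSet E) (_ : E ⊆ Q) (_ : 0 < wInt w E),
          volume E * wInt w E ^ (-(1 / (1:ℝ))) :=
      le_iSup_of_le (F c) (le_iSup_of_le (hFm c) (le_iSup_of_le (hFQ c)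
        (le_iSup_of_le (pos_iff_ne_zero.2 hwF0) le_rfl)))
    exact absurd (hcle.trans hle2) (not_le.2 hSc)
  · -- p > 1
    have hp0 : (0:ℝ) < p := by linarith
    have hpne : p ≠ 1 := ne_of_gt hp1
    rw [dualWkNorm, if_neg hpne, wkNormW, wkNorm]
    set p' : ℝ := p / (p - 1) with hp'_def
    have hp'0 : (0:ℝ) < p' := div_pos hp0 (by linarith)
    have hinv : 1 / p' - 1 = -(1 / p) := by
      rw [hp'_def]; field_simp; ring
    apply iSup_le
    intro y
    rcases eq_or_ne y 0 with rfl | hy0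
    · simp
    have hc0 : (y : ℝ≥0∞) ≠ 0 := ENNReal.coe_ne_zero.2 hy0
    have hct : (y : ℝ≥0∞) ≠ ∞ := ENNReal.coe_ne_top
    have hμ : wMeasure w {x | (y:ℝ≥0∞) < g x} = wInt w (F ((y:ℝ≥0∞))) := by
      rw [wMeasure, withDensity_apply _ (hFm _)]; rfl
    rw [hμ]
    rcases eq_or_ne (wInt w (F ((y:ℝ≥0∞)))) 0 with hM0 | hM0
    · rw [hM0, ENNReal.zero_rpow_of_pos (by positivity), mul_zero]
      exact zero_le
    · have hMt := hFt ((y:ℝ≥0∞))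
      have hsplit : (wInt w (F ((y:ℝ≥0∞)))) ^ (1/p') =
          wInt w (F ((y:ℝ≥0∞))) * (wInt w (F ((y:ℝ≥0∞)))) ^ (1/p' - 1) := by
        have h := ENNReal.rpow_add (x := wInt w (F ((y:ℝ≥0∞)))) 1 (1/p' - 1) hM0 hMt
        rw [ENNReal.rpow_one, show (1:ℝ) + (1/p' - 1) = 1/p' by ring] at h
        exact h
      calc (y:ℝ≥0∞) * (wInt w (F ((y:ℝ≥0∞)))) ^ (1/p')
          = ((y:ℝ≥0∞) * wInt w (F ((y:ℝ≥0∞)))) * (wInt w (F ((y:ℝ≥0∞)))) ^ (1/p' - 1) := by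
            rw [hsplit, mul_assoc]
        _ ≤ volume (F ((y:ℝ≥0∞))) * (wInt w (F ((y:ℝ≥0∞)))) ^ (1/p' - 1) :=
            mul_le_mul_left (hkey _ hc0 hct) _
        _ = volume (F ((y:ℝ≥0∞))) * (wInt w (F ((y:ℝ≥0∞)))) ^ (-(1/p)) := by rw [hinv]
        _ ≤ _ := by
            refine le_iSup_of_le (F ((y:ℝ≥0∞))) ?_
            refine le_iSup_of_le (hFm _) ?_
            refine le_iSup_of_le (hFQ _) ?_
            exact le_iSup_of_le (pos_iff_ne_zero.2 hM0) le_rfl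

/-- Key lemma B: the set-form quantity is dominated by `p` times the dual weak norm. -/
lemma keyB {w : Rn n → ℝ≥0∞} (hw : Measurable w) (hw0 : ∀ x, 0 < w x ∧ w x ≠ ∞)
    {Q : Set (Rn n)} (hQm : MeasurableSet Q) (hQfin : wInt w Q ≠ ∞) {p : ℝ} (hp : 1 ≤ p)
    {E : Set (Rn n)} (hEm : MeasurableSet E) (hEQ : E ⊆ Q) (hE0 : 0 < wInt w E) :
    volume E * wInt w E ^ (-(1 / p)) ≤
      ENNReal.ofReal p * dualWkNorm p (Q.indicator fun x => (w x)⁻¹) w := by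
  set g : Rn n → ℝ≥0∞ := Q.indicator fun x => (w x)⁻¹ with hg_def
  have hg : Measurable g := (hw.inv).indicator hQm
  have hgtop : ∀ x, g x ≠ ∞ := by
    intro x
    rw [hg_def]
    by_cases hx : x ∈ Q
    · simp [indicator_of_mem hx, (hw0 x).1.ne']
    · simp [indicator_of_notMem hx]
  set M : ℝ≥0∞ := wInt w E with hM_def
  have hM0 : M ≠ 0 := hE0.ne'
  have hMt : M ≠ ∞ := (lt_of_le_of_lt (lintegral_mono_set hEQ) hQfin.lt_top).ne
  have hvol : volume E = ∫⁻ x in E, g x ∂(wMeasure w) := by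
    rw [wMeasure, restrict_withDensity hEm,
      lintegral_withDensity_eq_lintegral_mul _ hw hg, ← setLIntegral_one]
    refine setLIntegral_congr_fun hEm ?_
    intro x hx
    simp only [Pi.mul_apply, hg_def, indicator_of_mem (hEQ hx)]
    rw [ENNReal.mul_inv_cancel (hw0 x).1.ne' (hw0 x).2]
  have hμE : wMeasure w E = M := by rw [wMeasure, withDensity_apply _ hEm]; rfl
  rcases eq_or_lt_of_le hp with hp1 | hp1
  · -- p = 1
    subst hp1
    rw [dualWkNorm, if_pos rfl]
    have hint : volume E ≤ essSup g (wMeasure w) * M := by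
      rw [hvol]
      calc ∫⁻ x in E, g x ∂(wMeasure w)
          ≤ ∫⁻ _ in E, essSup g (wMeasure w) ∂(wMeasure w) :=
            lintegral_mono_ae (ae_restrict_of_ae (ae_le_essSup g))
        _ = essSup g (wMeasure w) * M := by rw [setLIntegral_const, hμE]
    rw [show (-(1/(1:ℝ))) = -1 by norm_num, ENNReal.rpow_neg_one, ENNReal.ofReal_one, one_mul]
    calc volume E * M⁻¹ ≤ essSup g (wMeasure w) * M * M⁻¹ := mul_le_mul_left hint _
      _ = essSup g (wMeasure w) := by
          rw [mul_assoc, ENNReal.mul_inv_cancel hM0 hMt, mul_one]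
  · -- p > 1
    have hp0 : (0:ℝ) < p := by linarith
    have hpne : p ≠ 1 := ne_of_gt hp1
    rw [dualWkNorm, if_neg hpne]
    set p' : ℝ := p / (p - 1) with hp'_def
    have hp'1 : 1 < p' := by
      rw [hp'_def, lt_div_iff₀ (by linarith : (0:ℝ) < p - 1)]; linarith
    have hp'0 : (0:ℝ) < p' := by linarith
    set N : ℝ≥0∞ := wkNormW g p' w with hN_def
    rcases eq_or_ne N ∞ with hNt | hNtop
    · rw [hNt, ENNReal.mul_top (ENNReal.ofReal_pos.2 hp0).ne']
      exact le_top
    rcases eq_or_ne N 0 with hN0 | hN0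
    · -- degenerate: g = 0 a.e., so volume E = 0
      have hzero : ∀ y : ℝ≥0, y ≠ 0 → wMeasure w {x | (y:ℝ≥0∞) < g x} = 0 := by
        intro y hy
        have h1 : (y:ℝ≥0∞) * (wMeasure w {x | (y:ℝ≥0∞) < g x}) ^ (1/p') ≤ N :=
          le_iSup (fun z : ℝ≥0 => (z:ℝ≥0∞) * (wMeasure w {x | (z:ℝ≥0∞) < g x}) ^ (1/p')) y
        rw [hN0, le_zero_iff, mul_eq_zero] at h1
        rcases h1 with h1 | h1
        · exact absurd h1 (ENNReal.coe_ne_zero.2 hy)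
        · rcases (ENNReal.rpow_eq_zero_iff.1 h1) with ⟨h2, -⟩ | ⟨-, h3⟩
          · exact h2
          · exact absurd h3 (by positivity : (0:ℝ) < 1/p').not_gt
      have hg0 : wMeasure w {x | 0 < g x} = 0 := by
        have hsub : {x | 0 < g x} ⊆ ⋃ k : ℕ, {x | ((k:ℝ≥0∞))⁻¹ < g x} := by
          intro x hx
          obtain ⟨k, hk⟩ := ENNReal.exists_inv_nat_lt (hx.ne' : g x ≠ 0)
          exact mem_iUnion.2 ⟨k, hk⟩
        refine le_antisymm (le_trans (measure_mono hsub) ?_) zero_le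
        refine le_trans (measure_iUnion_le _) ?_
        have hterm : ∀ k : ℕ, wMeasure w {x | ((k:ℝ≥0∞))⁻¹ < g x} = 0 := by
          intro k
          rcases Nat.eq_zero_or_pos k with rfl | hk
          · have : {x | ((0:ℕ):ℝ≥0∞)⁻¹ < g x} = (∅ : Set (Rn n)) := by
              ext x
              simp only [Nat.cast_zero, ENNReal.inv_zero, mem_setOf_eq, mem_empty_iff_false,
                iff_false, not_lt]
              exact le_top
            rw [this]; exact measure_empty
          · have hcoe : ((k:ℝ≥0∞))⁻¹ = (((k:ℝ≥0)⁻¹ : ℝ≥0) : ℝ≥0∞) := by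
              push_cast
              rw [ENNReal.coe_inv (by exact_mod_cast hk.ne' : (k:ℝ≥0) ≠ 0)]
              norm_cast
            rw [hcoe]
            exact hzero _ (by positivity)
        simp [hterm]
      have hEzero : ∫⁻ x in E, g x ∂(wMeasure w) = 0 := by
        rw [lintegral_eq_zero_iff hg]
        refine (ae_iff).2 ?_
        have hms : MeasurableSet {x | ¬ g x = 0} := (hg (measurableSet_singleton 0)).compl
        have hmz : (wMeasure w).restrict E {x | ¬ g x = 0} ≤ wMeasure w {x | 0 < g x} := by
          rw [Measure.restrict_apply hms]
          refine measure_mono ?_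
          intro x hx
          exact pos_iff_ne_zero.2 hx.1
        exact le_antisymm (hmz.trans hg0.le) zero_le
      rw [hvol, hEzero, zero_mul]
      exact zero_le
    -- main case : 0 < N < ∞
    have hdist : ∀ y : ℝ≥0, y ≠ 0 →
        wMeasure w {x | (y:ℝ≥0∞) < g x} ≤ (N / y) ^ p' := by
      intro y hy
      have h1 : (y:ℝ≥0∞) * (wMeasure w {x | (y:ℝ≥0∞) < g x}) ^ (1/p') ≤ N :=
        le_iSup (fun z : ℝ≥0 => (z:ℝ≥0∞) * (wMeasure w {x | (z:ℝ≥0∞) < g x}) ^ (1/p')) y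
      have h2 : (wMeasure w {x | (y:ℝ≥0∞) < g x}) ^ (1/p') ≤ N / y :=
        (ENNReal.le_div_iff_mul_le (Or.inl (ENNReal.coe_ne_zero.2 hy))
          (Or.inl ENNReal.coe_ne_top)).2 (by rwa [mul_comm])
      calc wMeasure w {x | (y:ℝ≥0∞) < g x}
          = ((wMeasure w {x | (y:ℝ≥0∞) < g x}) ^ (1/p')) ^ p' := by
            rw [← ENNReal.rpow_mul, one_div, inv_mul_cancel₀ hp'0.ne', ENNReal.rpow_one]
        _ ≤ (N / y) ^ p' := ENNReal.rpow_le_rpow h2 hp'0.le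
    have hMe0 : M ^ (-(1/p')) ≠ 0 := by
      simp [ENNReal.rpow_eq_zero_iff, hM0, hMt]
    have hMet : M ^ (-(1/p')) ≠ ∞ := by
      simp [ENNReal.rpow_eq_top_iff, hM0, hMt]
    have hA0 : N * M ^ (-(1/p')) ≠ 0 := mul_ne_zero hN0 hMe0
    have hAt : N * M ^ (-(1/p')) ≠ ∞ := ENNReal.mul_ne_top hNtop hMet
    set T : ℝ := (N * M ^ (-(1/p'))).toReal with hT_def
    have hT0 : 0 < T := ENNReal.toReal_pos hA0 hAt
    have hofT : ENNReal.ofReal T = N * M ^ (-(1/p')) := ENNReal.ofReal_toReal hAt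
    have hlc : ∫⁻ x in E, g x ∂(wMeasure w)
        = ∫⁻ t in Ioi (0:ℝ), (wMeasure w).restrict E {a | t < (g a).toReal} := by
      rw [← lintegral_eq_lintegral_meas_lt ((wMeasure w).restrict E)
        (ae_of_all _ fun x => ENNReal.toReal_nonneg) hg.ennreal_toReal.aemeasurable]
      exact lintegral_congr fun x => (ENNReal.ofReal_toReal (hgtop x)).symm
    have hbound1 : ∀ t ∈ Ioc (0:ℝ) T, (wMeasure w).restrict E {a | t < (g a).toReal} ≤ M := by
      intro t _
      calc (wMeasure w).restrict E {a | t < (g a).toReal}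
          ≤ (wMeasure w).restrict E univ := measure_mono (subset_univ _)
        _ = M := by rw [Measure.restrict_apply_univ, hμE]
    have hbound2 : ∀ t ∈ Ioi T, (wMeasure w).restrict E {a | t < (g a).toReal}
        ≤ N ^ p' * (ENNReal.ofReal t) ^ (-p') := by
      intro t ht
      have ht0 : (0:ℝ) < t := hT0.trans ht
      have hseteq : {a : Rn n | t < (g a).toReal} = {a : Rn n | ((t.toNNReal : ℝ≥0∞)) < g a} := by
        ext a
        rw [mem_setOf_eq, mem_setOf_eq,
          show ((t.toNNReal : ℝ≥0∞)) = ENNReal.ofReal t from rfl]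
        exact (ENNReal.ofReal_lt_iff_lt_toReal ht0.le (hgtop a)).symm
      have hmeas : MeasurableSet {a : Rn n | ((t.toNNReal : ℝ≥0∞)) < g a} :=
        measurableSet_lt measurable_const hg
      calc (wMeasure w).restrict E {a | t < (g a).toReal}
          ≤ wMeasure w {a | ((t.toNNReal : ℝ≥0∞)) < g a} := by
            rw [hseteq, Measure.restrict_apply hmeas]
            exact measure_mono inter_subset_left
        _ ≤ (N / (t.toNNReal : ℝ≥0∞)) ^ p' := hdist _ (by
            simp [Real.toNNReal_eq_zero, not_le, ht0])
        _ = N ^ p' * (ENNReal.ofReal t) ^ (-p') := by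
            rw [ENNReal.div_rpow_of_nonneg _ _ hp'0.le, div_eq_mul_inv,
              ← ENNReal.rpow_neg]
            rfl
    have hsplit : ∫⁻ t in Ioi (0:ℝ), (wMeasure w).restrict E {a | t < (g a).toReal}
        ≤ M * ENNReal.ofReal T
          + N ^ p' * ∫⁻ t in Ioi T, (ENNReal.ofReal t) ^ (-p') := by
      rw [← Ioc_union_Ioi_eq_Ioi hT0.le]
      refine le_trans (lintegral_union_le _ _ _) (add_le_add ?_ ?_)
      · calc ∫⁻ t in Ioc (0:ℝ) T, (wMeasure w).restrict E {a | t < (g a).toReal}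
            ≤ ∫⁻ _ in Ioc (0:ℝ) T, M := setLIntegral_mono' measurableSet_Ioc hbound1
          _ = M * ENNReal.ofReal T := by
              rw [setLIntegral_const, Real.volume_Ioc, sub_zero]
      · calc ∫⁻ t in Ioi T, (wMeasure w).restrict E {a | t < (g a).toReal}
            ≤ ∫⁻ t in Ioi T, N ^ p' * (ENNReal.ofReal t) ^ (-p') :=
              setLIntegral_mono' measurableSet_Ioi (fun t ht =>
                le_trans (hbound2 t ht) (le_refl _))
          _ = N ^ p' * ∫⁻ t in Ioi T, (ENNReal.ofReal t) ^ (-p') :=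
              lintegral_const_mul' _ _ (ENNReal.rpow_ne_top_of_nonneg hp'0.le hNtop)
    have hptail : ∫⁻ t in Ioi T, (ENNReal.ofReal t) ^ (-p')
        = (ENNReal.ofReal T) ^ (1 - p') * ENNReal.ofReal (p - 1) := by
      have hlt : -p' < -1 := by linarith
      have h1 : ∫⁻ t in Ioi T, (ENNReal.ofReal t) ^ (-p')
          = ∫⁻ t in Ioi T, ENNReal.ofReal (t ^ (-p')) := by
        refine setLIntegral_congr_fun measurableSet_Ioi ?_
        intro t ht
        exact ENNReal.ofReal_rpow_of_pos (hT0.trans ht)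
      have h2 : ∫⁻ t in Ioi T, ENNReal.ofReal (t ^ (-p'))
          = ENNReal.ofReal (∫ t in Ioi T, t ^ (-p')) := by
        rw [ofReal_integral_eq_lintegral_ofReal (integrableOn_Ioi_rpow_of_lt hlt hT0)]
        filter_upwards [ae_restrict_mem measurableSet_Ioi] with t ht
        exact Real.rpow_nonneg (hT0.trans ht).le _
      have h3 : ∫ t in Ioi T, t ^ (-p') = T ^ (1 - p') * (p - 1) := by
        rw [integral_Ioi_rpow_of_lt hlt hT0]
        have hpm1 : p' - 1 = 1 / (p - 1) := by
          have hne : p - 1 ≠ 0 := by linarith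
          rw [hp'_def]; field_simp; ring
        rw [show (-p' + 1 : ℝ) = -(p' - 1) by ring, hpm1]
        rw [show (1 - p' : ℝ) = -(p' - 1) by ring, hpm1]
        have hne : p - 1 ≠ 0 := by linarith
        field_simp
      rw [h1, h2, h3, ENNReal.ofReal_mul (Real.rpow_nonneg hT0.le _),
        ← ENNReal.ofReal_rpow_of_pos hT0]
    have htotal : volume E ≤ N * M ^ ((1:ℝ)/p) * ENNReal.ofReal p := by
      have e1 : M * ENNReal.ofReal T = N * M ^ ((1:ℝ)/p) := by
        rw [hofT]
        have hexp : (1:ℝ) + -(1/p') = 1/p := by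
          have hne : p - 1 ≠ 0 := by linarith
          have h0 : p ≠ 0 := by linarith
          rw [hp'_def, one_div_div]
          field_simp
          ring
        calc M * (N * M ^ (-(1/p'))) = N * (M ^ (1:ℝ) * M ^ (-(1/p'))) := by
              rw [ENNReal.rpow_one]; ring
          _ = N * M ^ ((1:ℝ) + -(1/p')) := by rw [← ENNReal.rpow_add _ _ hM0 hMt]
          _ = N * M ^ ((1:ℝ)/p) := by rw [hexp]
      have e2 : N ^ p' * ((ENNReal.ofReal T) ^ (1 - p') * ENNReal.ofReal (p - 1))
          = N * M ^ ((1:ℝ)/p) * ENNReal.ofReal (p - 1) := by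
        rw [hofT, ENNReal.mul_rpow_of_ne_top hNtop hMet, ← ENNReal.rpow_mul,
          ← mul_assoc, ← mul_assoc, ← ENNReal.rpow_add _ _ hN0 hNtop]
        have hexp1 : p' + (1 - p') = 1 := by ring
        have hexp2 : -(1/p') * (1 - p') = 1/p := by
          have hne : p - 1 ≠ 0 := by linarith
          have h0 : p ≠ 0 := by linarith
          rw [hp'_def, one_div_div]
          field_simp
          ring
        rw [hexp1, hexp2, ENNReal.rpow_one]
      calc volume E = ∫⁻ x in E, g x ∂(wMeasure w) := hvol
        _ = ∫⁻ t in Ioi (0:ℝ), (wMeasure w).restrict E {a | t < (g a).toReal} := hlc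
        _ ≤ M * ENNReal.ofReal T + N ^ p' * ∫⁻ t in Ioi T, (ENNReal.ofReal t) ^ (-p') := hsplit
        _ = N * M ^ ((1:ℝ)/p) + N * M ^ ((1:ℝ)/p) * ENNReal.ofReal (p - 1) := by
            rw [hptail, e1, e2]
        _ = N * M ^ ((1:ℝ)/p) * (1 + ENNReal.ofReal (p - 1)) := by ring
        _ = N * M ^ ((1:ℝ)/p) * ENNReal.ofReal p := by
            rw [← ENNReal.ofReal_one, ← ENNReal.ofReal_add zero_le_one (by linarith : (0:ℝ) ≤ p - 1)]
            norm_num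
    calc volume E * M ^ (-(1/p))
        ≤ N * M ^ ((1:ℝ)/p) * ENNReal.ofReal p * M ^ (-(1/p)) := mul_le_mul_left htotal _
      _ = ENNReal.ofReal p * N * (M ^ ((1:ℝ)/p) * M ^ (-(1/p))) := by ring
      _ = ENNReal.ofReal p * N := by
          rw [← ENNReal.rpow_add _ _ hM0 hMt, add_neg_cancel, ENNReal.rpow_zero, mul_one]

lemma iSup_body_div (w : Rn n → ℝ≥0∞) (p : ℝ) (Q : Set (Rn n)) (V : ℝ≥0∞) :
    (⨆ (E : Set (Rn n)) (_ : MeasurableSet E) (_ : E ⊆ Q) (_ : 0 < wInt w E),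
        volume E * wInt w E ^ (-(1 / p))) / V
      = ⨆ (E : Set (Rn n)) (_ : MeasurableSet E) (_ : E ⊆ Q) (_ : 0 < wInt w E),
          (volume E / V) * wInt w E ^ (-(1 / p)) := by
  simp only [ENNReal.iSup_div]
  exact iSup_congr fun E => iSup_congr fun _ => iSup_congr fun _ => iSup_congr fun _ => by
    simp only [div_eq_mul_inv]; ring

end Helpers

/-- `[w⃗,ν] ≤ ‖w⃗,ν‖ ≤ p_1 ⋯ p_m [w⃗,ν]`. -/
theorem stmt15 {n : ℕ} (m : ℕ) (hm : 1 ≤ m) (pp : Fin m → ℝ) (hpp : ∀ i, 1 ≤ pp i)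
    (p : ℝ) (hp : p⁻¹ = ∑ i, (pp i)⁻¹)
    (w : Fin m → Rn n → ℝ≥0∞) (hw : ∀ i, IsWeight (w i))
    (ν : Rn n → ℝ≥0∞) (hν : IsWeight ν) :
    AvecConst pp p w ν ≤ AvecNorm pp p w ν ∧
      AvecNorm pp p w ν ≤ ENNReal.ofReal (∏ i, pp i) * AvecConst pp p w ν := by
  constructor
  · unfold AvecConst AvecNorm
    apply iSup₂_le
    intro Q hQ
    refine le_trans ?_ (le_iSup₂_of_le Q hQ le_rfl)
    refine mul_le_mul_right (Finset.prod_le_prod' fun i _ => ?_) _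
    have h1 := keyA (hw i).1 (hw i).2.1 (isCube_measurableSet hQ) ((hw i).2.2 Q hQ) (hpp i)
    calc dualWkNorm (pp i) (Q.indicator fun x => (w i x)⁻¹) (w i) / volume Q
        ≤ (⨆ (E : Set (Rn n)) (_ : MeasurableSet E) (_ : E ⊆ Q) (_ : 0 < wInt (w i) E),
            volume E * wInt (w i) E ^ (-(1 / pp i))) / volume Q :=
          ENNReal.div_le_div_right h1 _
      _ = _ := iSup_body_div (w i) (pp i) Q (volume Q)
  · unfold AvecConst AvecNorm
    apply iSup₂_le
    intro Q hQ
    have hconst : ∀ i : Fin m,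
        (⨆ (E : Set (Rn n)) (_ : MeasurableSet E) (_ : E ⊆ Q) (_ : 0 < wInt (w i) E),
            (volume E / volume Q) * wInt (w i) E ^ (-(1 / pp i)))
          ≤ ENNReal.ofReal (pp i) *
            (dualWkNorm (pp i) (Q.indicator fun x => (w i x)⁻¹) (w i) / volume Q) := by
      intro i
      refine iSup_le fun E => iSup_le fun hEm => iSup_le fun hEQ => iSup_le fun hE0 => ?_
      have h2 := keyB (hw i).1 (hw i).2.1 (isCube_measurableSet hQ) ((hw i).2.2 Q hQ)
        (hpp i) hEm hEQ hE0
      calc (volume E / volume Q) * wInt (w i) E ^ (-(1 / pp i))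
          = (volume E * wInt (w i) E ^ (-(1 / pp i))) / volume Q := by
            simp only [div_eq_mul_inv]; ring
        _ ≤ (ENNReal.ofReal (pp i) *
              dualWkNorm (pp i) (Q.indicator fun x => (w i x)⁻¹) (w i)) / volume Q :=
            ENNReal.div_le_div_right h2 _
        _ = ENNReal.ofReal (pp i) *
              (dualWkNorm (pp i) (Q.indicator fun x => (w i x)⁻¹) (w i) / volume Q) := by
            simp only [div_eq_mul_inv]; ring
    calc wInt ν Q ^ (1/p) *
          ∏ i, ⨆ (E : Set (Rn n)) (_ : MeasurableSet E) (_ : E ⊆ Q) (_ : 0 < wInt (w i) E),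
            (volume E / volume Q) * wInt (w i) E ^ (-(1 / pp i))
        ≤ wInt ν Q ^ (1/p) * ∏ i, ENNReal.ofReal (pp i) *
            (dualWkNorm (pp i) (Q.indicator fun x => (w i x)⁻¹) (w i) / volume Q) :=
          mul_le_mul_right (Finset.prod_le_prod' fun i _ => hconst i) _
      _ = ENNReal.ofReal (∏ i, pp i) * (wInt ν Q ^ (1/p) *
            ∏ i, dualWkNorm (pp i) (Q.indicator fun x => (w i x)⁻¹) (w i) / volume Q) := by
          rw [Finset.prod_mul_distrib,
            ENNReal.ofReal_prod_of_nonneg (fun i _ => by linarith [hpp i])]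
          ring
      _ ≤ ENNReal.ofReal (∏ i, pp i) *
            (⨆ (Q' : Set (Rn n)) (_ : IsCube Q'), wInt ν Q' ^ (1/p) *
              ∏ i, dualWkNorm (pp i) (Q'.indicator fun x => (w i x)⁻¹) (w i) / volume Q') :=
          mul_le_mul_right (le_iSup₂ (f := fun (Q' : Set (Rn n)) (_ : IsCube Q') =>
            wInt ν Q' ^ (1/p) *
              ∏ i, dualWkNorm (pp i) (Q'.indicator fun x => (w i x)⁻¹) (w i) / volume Q')
            Q hQ) _
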